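/- Let E be a Polish space with a σ-finite Borel measure μ. Then the space L^∞(E,μ) equipped with the topology C(L^∞,L^1) is complete; that is, L^∞(E,μ) is complete for the uniform structure induced by the family of seminorms p_K(F) = sup_{g∈K} |∫_E F g dμ|, K ranging over the norm-compact subsets of L^1(E,μ) (every Cauchy filter/net for this uniformity converges in L^∞(E,μ) with respect to C(L^∞,L^1)). -/

import Mathlib

open MeasureTheory Filter Topology Set
open scoped ENNReal NNReal RealInnerProductSpace

/-- The seminorm `p_K(F) = sup_{g ∈ K} |∫ F g dμ|` generating the topology
`C(L^∞, L^1)` of uniform convergence on (norm-compact) subsets `K` of `L^1`. -/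
noncomputable def pK {α : Type*} [MeasurableSpace α] (μ : Measure α)
    (K : Set (Lp ℝ 1 μ)) (F : Lp ℝ ⊤ μ) : ℝ :=
  ⨆ g ∈ K, |∫ x, F x * g x ∂μ|

section aux
variable {E : Type*} [MeasurableSpace E] {μ : Measure E}

lemma memL1_mul (F : Lp ℝ ⊤ μ) (u : Lp ℝ 1 μ) :
    Integrable (fun x => F x * u x) μ := by
  have := (L1.integrable_coeFn u).smul_of_top_right (Lp.memLp F)
  simpa [smul_eq_mul, Pi.mul_def] using this

lemma ae_norm_le_norm (F : Lp ℝ ⊤ μ) : ∀ᵐ x ∂μ, ‖F x‖ ≤ ‖F‖ := by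
  filter_upwards [ae_le_eLpNormEssSup (f := (F : E → ℝ)) (μ := μ)] with x hx
  have h2 : (‖F x‖₊ : ℝ≥0∞) ≤ eLpNorm (F : E → ℝ) ⊤ μ := by rwa [eLpNorm_exponent_top]
  calc ‖F x‖ = ((‖F x‖₊ : ℝ≥0∞)).toReal := by simp
  _ ≤ (eLpNorm (F : E → ℝ) ⊤ μ).toReal := ENNReal.toReal_mono (Lp.eLpNorm_ne_top F) h2
  _ = ‖F‖ := (Lp.norm_def F).symm

lemma abs_integral_le (F : Lp ℝ ⊤ μ) (u : Lp ℝ 1 μ) :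
    |∫ x, F x * u x ∂μ| ≤ ‖F‖ * ‖u‖ := by
  calc |∫ x, F x * u x ∂μ| ≤ ∫ x, ‖F x * u x‖ ∂μ := by
        simpa using norm_integral_le_integral_norm (fun x => F x * u x) (μ := μ)
  _ ≤ ∫ x, ‖F‖ * ‖u x‖ ∂μ := by
      refine integral_mono_ae (memL1_mul F u).norm
        ((L1.integrable_coeFn u).norm.const_mul _) ?_
      filter_upwards [ae_norm_le_norm F] with x hx
      rw [norm_mul]
      exact mul_le_mul_of_nonneg_right hx (norm_nonneg _)
  _ = ‖F‖ * ‖u‖ := by rw [integral_const_mul, ← L1.norm_eq_integral_norm]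

lemma pK_le {K : Set (Lp ℝ 1 μ)} {F : Lp ℝ ⊤ μ} {c : ℝ} (hc : 0 ≤ c)
    (h : ∀ u ∈ K, |∫ x, F x * u x ∂μ| ≤ c) : pK μ K F ≤ c :=
  Real.iSup_le (fun u => Real.iSup_le (fun hu => h u hu) hc) hc

lemma le_pK {K : Set (Lp ℝ 1 μ)} (hK : IsCompact K) {u : Lp ℝ 1 μ} (hu : u ∈ K)
    (F : Lp ℝ ⊤ μ) : |∫ x, F x * u x ∂μ| ≤ pK μ K F := by
  obtain ⟨R, hR⟩ := isBounded_iff_forall_norm_le.mp hK.isBounded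
  have hb : BddAbove (Set.range fun g => ⨆ _ : g ∈ K, |∫ x, F x * g x ∂μ|) := by
    refine ⟨max 0 (‖F‖ * R), ?_⟩
    rintro _ ⟨g, rfl⟩
    show (⨆ _ : g ∈ K, |∫ x, F x * g x ∂μ|) ≤ max 0 (‖F‖ * R)
    by_cases hg : g ∈ K
    · have h1 : (⨆ _ : g ∈ K, |∫ x, F x * g x ∂μ|) = |∫ x, F x * g x ∂μ| := ciSup_pos hg
      rw [h1]
      exact le_max_of_le_right ((abs_integral_le F g).trans
        (mul_le_mul_of_nonneg_left (hR g hg) (norm_nonneg F)))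
    · haveI : IsEmpty (g ∈ K) := ⟨hg⟩
      rw [Real.iSup_of_isEmpty]
      exact le_max_left _ _
  have h1 : (⨆ _ : u ∈ K, |∫ x, F x * u x ∂μ|) = |∫ x, F x * u x ∂μ| := ciSup_pos hu
  calc |∫ x, F x * u x ∂μ| = ⨆ _ : u ∈ K, |∫ x, F x * u x ∂μ| := h1.symm
  _ ≤ pK μ K F := le_ciSup hb u

lemma integral_sub_mul (F G : Lp ℝ ⊤ μ) (u : Lp ℝ 1 μ) :
    ∫ x, (F - G : Lp ℝ ⊤ μ) x * u x ∂μ = (∫ x, F x * u x ∂μ) - ∫ x, G x * u x ∂μ := by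
  rw [← integral_sub (memL1_mul F u) (memL1_mul G u)]
  refine integral_congr_ae ?_
  filter_upwards [Lp.coeFn_sub F G] with x hx
  rw [hx]
  simp [sub_mul]

lemma integral_mul_add (F : Lp ℝ ⊤ μ) (u v : Lp ℝ 1 μ) :
    ∫ x, F x * (u + v : Lp ℝ 1 μ) x ∂μ = (∫ x, F x * u x ∂μ) + ∫ x, F x * v x ∂μ := by
  rw [← integral_add (memL1_mul F u) (memL1_mul F v)]
  refine integral_congr_ae ?_
  filter_upwards [Lp.coeFn_add u v] with x hx
  rw [hx]
  simp [mul_add]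

lemma integral_mul_sub (F : Lp ℝ ⊤ μ) (u v : Lp ℝ 1 μ) :
    ∫ x, F x * (u - v : Lp ℝ 1 μ) x ∂μ = (∫ x, F x * u x ∂μ) - ∫ x, F x * v x ∂μ := by
  rw [← integral_sub (memL1_mul F u) (memL1_mul F v)]
  refine integral_congr_ae ?_
  filter_upwards [Lp.coeFn_sub u v] with x hx
  rw [hx]
  simp [mul_sub]

lemma integral_mul_smul (F : Lp ℝ ⊤ μ) (a : ℝ) (u : Lp ℝ 1 μ) :
    ∫ x, F x * (a • u : Lp ℝ 1 μ) x ∂μ = a * ∫ x, F x * u x ∂μ := by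
  rw [← integral_const_mul]
  refine integral_congr_ae ?_
  filter_upwards [Lp.coeFn_smul a u] with x hx
  rw [hx]
  simp only [Pi.smul_apply, smul_eq_mul]
  ring

end aux

section rep
variable {E : Type*} [MeasurableSpace E]

lemma aux_real_zero {C δ τ : ℝ} (hδ : 0 < δ) (hτ : 0 ≤ τ) (h : (C + δ) * τ ≤ C * τ) :
    τ = 0 := by nlinarith

lemma aux_measure_zero {ν : Measure E} {t : Set E} (hfin : ν t ≠ ⊤)
    (h : (ν t).toReal = 0) : ν t = 0 := by
  rcases (ENNReal.toReal_eq_zero_iff _).mp h with h6 | h6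
  · exact h6
  · exact absurd h6 hfin

set_option maxHeartbeats 1000000 in
/-- Riesz representation for the dual of `L¹` of a σ-finite measure. -/
lemma L1_dual_rep (μ : Measure E) [SigmaFinite μ] (φ : Lp ℝ 1 μ →L[ℝ] ℝ) :
    ∃ F₀ : Lp ℝ ⊤ μ, ∀ u : Lp ℝ 1 μ, ∫ x, F₀ x * u x ∂μ = φ u := by
  classical
  obtain ⟨g, hg_pos, hg_meas, hg_int⟩ :=
    exists_pos_lintegral_lt_of_sigmaFinite μ (ε := 1) one_ne_zero
  set h : E → ℝ := fun x => (g x : ℝ) with hh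
  have hh_meas : Measurable h := hg_meas.coe_nnreal_real
  set ν : Measure E := μ.withDensity (fun x => (g x : ℝ≥0∞)) with hν
  have hgE_meas : Measurable (fun x => (g x : ℝ≥0∞)) := hg_meas.coe_nnreal_ennreal
  haveI hν_fin : IsFiniteMeasure ν := isFiniteMeasure_withDensity (ne_top_of_lt hg_int)
  have hνμ : ν ≪ μ := withDensity_absolutelyContinuous μ _
  have hμν : μ ≪ ν := by
    refine withDensity_absolutelyContinuous' hgE_meas.aemeasurable ?_
    exact Eventually.of_forall fun x => by
      simpa using (hg_pos x).ne'
  -- eLpNorm transfer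
  have key_eLp : ∀ f : E → ℝ, AEStronglyMeasurable f ν →
      eLpNorm (fun x => f x * h x) 1 μ = eLpNorm f 1 ν := by
    intro f hf
    rw [eLpNorm_one_eq_lintegral_enorm, eLpNorm_one_eq_lintegral_enorm, hν,
      lintegral_withDensity_eq_lintegral_mul₀ hgE_meas.aemeasurable
        (hf.enorm.mono_ac hμν)]
    refine lintegral_congr fun x => ?_
    simp only [Pi.mul_apply, hh]
    rw [enorm_mul, mul_comm]
    congr 1
    simp [Real.nnnorm_of_nonneg (g x).2]
  -- membership of `f * h` in L¹(μ)
  have mem1 : ∀ f : E → ℝ, MemLp f 2 ν → MemLp (fun x => f x * h x) 1 μ := by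
    intro f hf
    refine ⟨(hf.aestronglyMeasurable.mono_ac hμν).mul hh_meas.aestronglyMeasurable, ?_⟩
    rw [key_eLp f hf.aestronglyMeasurable]
    exact (hf.mono_exponent one_le_two).2
  have memS : ∀ f : Lp ℝ 2 ν, MemLp (fun x => f x * h x) 1 μ :=
    fun f => mem1 _ (Lp.memLp f)
  set c : ℝ := ((ν Set.univ) ^ (2⁻¹ : ℝ)).toReal with hc
  -- the continuous linear map `S : L²(ν) → L¹(μ)`, `f ↦ f · h`
  set S : Lp ℝ 2 ν →ₗ[ℝ] Lp ℝ 1 μ :=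
  { toFun := fun f => (memS f).toLp _
    map_add' := by
      intro f₁ f₂
      refine (MemLp.toLp_congr (memS (f₁ + f₂)) ((memS f₁).add (memS f₂)) ?_).trans
        (MemLp.toLp_add _ _)
      filter_upwards [hμν.ae_eq (Lp.coeFn_add f₁ f₂)] with x hx
      simp only [Pi.add_apply, hx]
      ring
    map_smul' := by
      intro a f
      show (memS (a • f)).toLp _ = a • (memS f).toLp _
      refine (MemLp.toLp_congr (memS (a • f)) ((memS f).const_smul a) ?_).trans
        (MemLp.toLp_const_smul _ _)
      filter_upwards [hμν.ae_eq (Lp.coeFn_smul a f)] with x hx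
      simp only [Pi.smul_apply, hx, smul_eq_mul]
      ring } with hS
  have hSnorm : ∀ f : Lp ℝ 2 ν, ‖S f‖ ≤ c * ‖f‖ := by
    intro f
    show ‖(memS f).toLp _‖ ≤ c * ‖f‖
    rw [Lp.norm_toLp, key_eLp _ (Lp.aestronglyMeasurable f)]
    have hle := eLpNorm_le_eLpNorm_mul_rpow_measure_univ (p := 1) (q := 2) (μ := ν)
      one_le_two (Lp.aestronglyMeasurable f)
    have hexp : (1 / (1 : ℝ≥0∞).toReal - 1 / (2 : ℝ≥0∞).toReal) = (2⁻¹ : ℝ) := by norm_num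
    rw [hexp] at hle
    have hne : (ν Set.univ) ^ (2⁻¹ : ℝ) ≠ ⊤ :=
      ENNReal.rpow_ne_top_of_nonneg (by norm_num) (measure_ne_top ν _)
    calc (eLpNorm (↑f) 1 ν).toReal
        ≤ ((eLpNorm (↑f) 2 ν) * (ν Set.univ) ^ (2⁻¹ : ℝ)).toReal :=
          ENNReal.toReal_mono (ENNReal.mul_ne_top (Lp.eLpNorm_ne_top f) hne) hle
      _ = ‖f‖ * c := by rw [ENNReal.toReal_mul, Lp.norm_def]
      _ = c * ‖f‖ := mul_comm _ _
  have hc0 : 0 ≤ c := ENNReal.toReal_nonneg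
  set Sc : Lp ℝ 2 ν →L[ℝ] Lp ℝ 1 μ := S.mkContinuous c hSnorm with hSc
  -- Riesz representation in L²(ν)
  set ψ : Lp ℝ 2 ν →L[ℝ] ℝ := φ.comp Sc with hψ
  set G : Lp ℝ 2 ν := (InnerProductSpace.toDual ℝ (Lp ℝ 2 ν)).symm ψ with hG
  have hGrep : ∀ f : Lp ℝ 2 ν, ∫ x, G x * f x ∂ν = φ ((memS f).toLp _) := by
    intro f
    have h1 : (inner ℝ G f : ℝ) = ψ f := InnerProductSpace.toDual_symm_apply
    rw [L2.inner_def] at h1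
    simp [RCLike.inner_apply] at h1
    exact (integral_congr_ae (Eventually.of_forall fun x => mul_comm _ _)).trans h1
  -- essential bound on `G`
  set C : ℝ := ‖φ‖ with hC
  have hC0 : 0 ≤ C := norm_nonneg φ
  have hGint : ∀ f : Lp ℝ 2 ν, |∫ x, G x * f x ∂ν| ≤ C * (eLpNorm (f : E → ℝ) 1 ν).toReal := by
    intro f
    rw [hGrep f]
    calc |φ ((memS f).toLp _)| ≤ C * ‖(memS f).toLp _‖ := by
          simpa [Real.norm_eq_abs] using φ.le_opNorm ((memS f).toLp _)
    _ = C * (eLpNorm (f : E → ℝ) 1 ν).toReal := by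
        rw [Lp.norm_toLp, key_eLp _ (Lp.aestronglyMeasurable f)]
  obtain ⟨G', hG'sm, hG'ae⟩ : ∃ G' : E → ℝ, StronglyMeasurable G' ∧ (G : E → ℝ) =ᵐ[ν] G' :=
    ⟨(Lp.aestronglyMeasurable G).mk _, (Lp.aestronglyMeasurable G).stronglyMeasurable_mk,
      (Lp.aestronglyMeasurable G).ae_eq_mk⟩
  have hG'meas : Measurable G' := hG'sm.measurable
  have hGL1 : Integrable G' ν :=
    (memLp_one_iff_integrable.mp ((Lp.memLp G).mono_exponent one_le_two)).congr hG'ae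
  -- upper bound for set integrals of G'
  have upper : ∀ t : Set E, MeasurableSet t → |∫ x in t, G' x ∂ν| ≤ C * (ν t).toReal := by
    intro t ht
    have hmem : MemLp (t.indicator fun _ => (1 : ℝ)) 2 ν :=
      memLp_indicator_const 2 ht 1 (Or.inr (measure_ne_top ν t))
    have h1 := hGint (hmem.toLp _)
    have h2 : ∫ x, G x * (hmem.toLp _) x ∂ν = ∫ x in t, G' x ∂ν := by
      rw [← integral_indicator ht]
      refine integral_congr_ae ?_
      filter_upwards [hG'ae, hmem.coeFn_toLp] with x hx1 hx2
      by_cases hxt : x ∈ t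
      · simp [hx2, Set.indicator_of_mem hxt, hx1]
      · simp [hx2, Set.indicator_of_notMem hxt]
    have h3 : eLpNorm ((hmem.toLp _ : Lp ℝ 2 ν) : E → ℝ) 1 ν = ν t := by
      rw [eLpNorm_congr_ae hmem.coeFn_toLp, eLpNorm_indicator_const ht one_ne_zero ENNReal.one_ne_top]
      simp
    rw [h2, h3] at h1
    exact h1
  have hsmall : ∀ δ : ℝ, 0 < δ → ν {x | C + δ ≤ |G' x|} = 0 := by
    intro δ hδ
    have hpos : ν {x | C + δ ≤ G' x} = 0 := by
      set t := {x | C + δ ≤ G' x} with htdef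
      have ht : MeasurableSet t := measurableSet_le measurable_const hG'meas
      have hlow : (C + δ) * (ν t).toReal ≤ ∫ x in t, G' x ∂ν :=
        by simpa [Measure.real, smul_eq_mul, mul_comm] using (
          setIntegral_ge_of_const_le ht (measure_ne_top ν t) (fun x hx => hx)
          hGL1.integrableOn)
      have hup : |∫ x in t, G' x ∂ν| ≤ C * (ν t).toReal := upper t ht
      have h4 : (C + δ) * (ν t).toReal ≤ C * (ν t).toReal :=
        hlow.trans ((le_abs_self _).trans hup)
      exact aux_measure_zero (measure_ne_top ν t)
        (aux_real_zero hδ ENNReal.toReal_nonneg h4)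
    have hneg : ν {x | G' x ≤ -(C + δ)} = 0 := by
      set t := {x | G' x ≤ -(C + δ)} with htdef
      have ht : MeasurableSet t := measurableSet_le hG'meas measurable_const
      have hlow : (C + δ) * (ν t).toReal ≤ ∫ x in t, (-G') x ∂ν :=
        by simpa [Measure.real, smul_eq_mul, mul_comm] using (
          setIntegral_ge_of_const_le ht (measure_ne_top ν t)
          (fun x hx => by
            have hx' : G' x ≤ -(C + δ) := hx
            simp only [Pi.neg_apply]
            linarith) hGL1.neg.integrableOn)
      have hneg' : ∫ x in t, (-G') x ∂ν = -∫ x in t, G' x ∂ν := by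
        simpa using integral_neg (μ := ν.restrict t) G'
      have hup : |∫ x in t, G' x ∂ν| ≤ C * (ν t).toReal := upper t ht
      have h4 : (C + δ) * (ν t).toReal ≤ C * (ν t).toReal := by
        rw [hneg'] at hlow
        exact hlow.trans ((neg_le_abs _).trans hup)
      exact aux_measure_zero (measure_ne_top ν t)
        (aux_real_zero hδ ENNReal.toReal_nonneg h4)
    refine measure_mono_null (fun x hx => ?_) (measure_union_null hpos hneg)
    rcases abs_cases (G' x) with ⟨he, _⟩ | ⟨he, _⟩
    · exact Or.inl (by simpa [he] using hx)
    · exact Or.inr (by simp only [Set.mem_setOf_eq] at hx ⊢; linarith [hx, he])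
  have hbd : ∀ᵐ x ∂ν, |G' x| ≤ C := by
    rw [ae_iff]
    refine measure_mono_null (fun x hx => ?_)
      (measure_iUnion_null (s := fun n : ℕ => {x | C + (1 / ((n : ℝ) + 1)) ≤ |G' x|})
        (fun n => hsmall _ (by positivity)))
    simp only [Set.mem_setOf_eq, not_le] at hx
    obtain ⟨n, hn⟩ := exists_nat_one_div_lt (show 0 < |G' x| - C by linarith)
    exact Set.mem_iUnion.mpr ⟨n, by simp only [Set.mem_setOf_eq]; linarith⟩
  have hbdμ : ∀ᵐ x ∂μ, |G' x| ≤ C := hμν.ae_le hbd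
  have hF₀mem : MemLp G' ⊤ μ :=
    memLp_top_of_bound hG'sm.aestronglyMeasurable C
      (by filter_upwards [hbdμ] with x hx; simpa [Real.norm_eq_abs] using hx)
  refine ⟨hF₀mem.toLp G', ?_⟩
  intro u
  -- measurable representative of `u`
  obtain ⟨w', hw'sm, hw'ae⟩ : ∃ w' : E → ℝ, StronglyMeasurable w' ∧ (u : E → ℝ) =ᵐ[μ] w' :=
    ⟨(Lp.aestronglyMeasurable u).mk _, (Lp.aestronglyMeasurable u).stronglyMeasurable_mk,
      (Lp.aestronglyMeasurable u).ae_eq_mk⟩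
  have hw'int : Integrable w' μ := (L1.integrable_coeFn u).congr hw'ae
  have hhx_pos : ∀ x, 0 < h x := fun x => by exact_mod_cast hg_pos x
  -- truncation sets
  set s : ℕ → Set E := fun n => {x | |w' x| ≤ (n : ℝ) * h x} with hsdef
  have hs_meas : ∀ n, MeasurableSet (s n) := fun n =>
    measurableSet_le hw'sm.measurable.abs (hh_meas.const_mul _)
  set v : ℕ → E → ℝ := fun n => (s n).indicator w' with hvdef
  have hv_meas : ∀ n, StronglyMeasurable (v n) := fun n => hw'sm.indicator (hs_meas n)
  have hvle : ∀ n x, |v n x| ≤ |w' x| := by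
    intro n x
    by_cases hxt : x ∈ s n
    · simp [hvdef, Set.indicator_of_mem hxt]
    · simp [hvdef, Set.indicator_of_notMem hxt, abs_nonneg]
  have hv_int : ∀ n, Integrable (v n) μ := fun n =>
    hw'int.mono (hv_meas n).aestronglyMeasurable
      (Eventually.of_forall fun x => by
        simpa [Real.norm_eq_abs] using hvle n x)
  set uL : ℕ → Lp ℝ 1 μ := fun n => (memLp_one_iff_integrable.mpr (hv_int n)).toLp _
    with huLdef
  -- corresponding L²(ν) functions
  set fν : ℕ → E → ℝ := fun n => (s n).indicator (fun x => w' x / h x) with hfνdef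
  have hfν_bd : ∀ n x, |fν n x| ≤ (n : ℝ) := by
    intro n x
    by_cases hxt : x ∈ s n
    · have hx' : |w' x| ≤ (n : ℝ) * h x := hxt
      rw [hfνdef]
      simp only [Set.indicator_of_mem hxt, abs_div, abs_of_pos (hhx_pos x)]
      rw [div_le_iff₀ (hhx_pos x)]
      exact hx'
    · simp [hfνdef, Set.indicator_of_notMem hxt, Nat.cast_nonneg]
  have hfν_mem : ∀ n, MemLp (fν n) 2 ν := by
    intro n
    refine MemLp.of_bound ?_ (n : ℝ) (Eventually.of_forall fun x => by
      simpa [Real.norm_eq_abs] using hfν_bd n x)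
    exact ((hw'sm.measurable.div hh_meas).indicator (hs_meas n)).stronglyMeasurable.aestronglyMeasurable
  have hfνh : ∀ n x, fν n x * h x = v n x := by
    intro n x
    by_cases hxt : x ∈ s n
    · rw [hfνdef, hvdef]
      simp only [Set.indicator_of_mem hxt]
      exact div_mul_cancel₀ _ (hhx_pos x).ne'
    · simp [hfνdef, hvdef, Set.indicator_of_notMem hxt]
  -- the identity ∫ G'·vₙ dμ = φ (uLₙ)
  have star : ∀ n, ∫ x, G' x * v n x ∂μ = φ (uL n) := by
    intro n
    have h1 := hGrep ((hfν_mem n).toLp _)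
    have h2 : ∫ x, G x * ((hfν_mem n).toLp _) x ∂ν = ∫ x, G' x * fν n x ∂ν := by
      refine integral_congr_ae ?_
      filter_upwards [hG'ae, (hfν_mem n).coeFn_toLp] with x hx1 hx2
      rw [hx1, hx2]
    have h3 : ∫ x, G' x * fν n x ∂ν = ∫ x, G' x * v n x ∂μ := by
      rw [hν, integral_withDensity_eq_integral_smul hg_meas]
      refine integral_congr_ae (Eventually.of_forall fun x => ?_)
      show (g x : ℝ) • (G' x * fν n x) = G' x * v n x
      rw [smul_eq_mul]
      rw [← hfνh n x]
      ring
    have h4 : φ ((memS ((hfν_mem n).toLp _)).toLp _) = φ (uL n) := by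
      congr 1
      refine MemLp.toLp_congr _ _ ?_
      filter_upwards [hμν.ae_eq ((hfν_mem n).coeFn_toLp)] with x hx
      rw [hx]
      exact hfνh n x
    rw [h2, h3, h4] at h1
    exact h1
  clear_value S Sc ψ G
  clear hGrep hGint hsmall upper hSnorm memS mem1 key_eLp hbd hfν_mem hfνh hfν_bd hG'ae
    hGL1 hS hSc hψ hG hμν hνμ hfνdef
  -- limit of the left-hand side
  have hGv : Tendsto (fun n => ∫ x, G' x * v n x ∂μ) atTop (𝓝 (∫ x, G' x * w' x ∂μ)) := by
    refine tendsto_integral_of_dominated_convergence (fun x => C * |w' x|)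
      (fun n => (hG'sm.mul (hv_meas n)).aestronglyMeasurable)
      (hw'int.abs.const_mul C) (fun n => ?_) ?_
    · filter_upwards [hbdμ] with x hx
      rw [Real.norm_eq_abs, abs_mul]
      exact mul_le_mul hx (hvle n x) (abs_nonneg _) hC0
    · refine Eventually.of_forall fun x => ?_
      have hev : ∀ᶠ n in atTop, G' x * v n x = G' x * w' x := by
        obtain ⟨N, hN⟩ := exists_nat_ge (|w' x| / h x)
        refine eventually_atTop.mpr ⟨N, fun n hn => ?_⟩
        have hmem : x ∈ s n := by
          show |w' x| ≤ (n : ℝ) * h x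
          rw [div_le_iff₀ (hhx_pos x)] at hN
          calc |w' x| ≤ (N : ℝ) * h x := hN
          _ ≤ (n : ℝ) * h x := by
              have : (N : ℝ) ≤ (n : ℝ) := by exact_mod_cast hn
              nlinarith [le_of_lt (hhx_pos x)]
        rw [hvdef]
        simp [Set.indicator_of_mem hmem]
      exact Tendsto.congr' (hev.mono fun n hn => hn.symm) tendsto_const_nhds
  -- limit of the right-hand side
  have hφv : Tendsto (fun n => φ (uL n)) atTop (𝓝 (φ u)) := by
    have hdiff : Tendsto (fun n => ∫ x, |v n x - w' x| ∂μ) atTop (𝓝 0) := by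
      have h0 : (0 : ℝ) = ∫ x, (0 : ℝ) ∂μ := by simp
      rw [h0]
      refine tendsto_integral_of_dominated_convergence (fun x => 2 * |w' x|)
        (fun n => ((hv_meas n).measurable.sub hw'sm.measurable).abs.aestronglyMeasurable)
        (hw'int.abs.const_mul 2) (fun n => Eventually.of_forall fun x => ?_) ?_
      · rw [Real.norm_eq_abs, abs_abs]
        calc |v n x - w' x| ≤ |v n x| + |w' x| := abs_sub _ _
        _ ≤ 2 * |w' x| := by linarith [hvle n x]
      · refine Eventually.of_forall fun x => ?_
        have hev : ∀ᶠ n in atTop, |v n x - w' x| = 0 := by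
          obtain ⟨N, hN⟩ := exists_nat_ge (|w' x| / h x)
          refine eventually_atTop.mpr ⟨N, fun n hn => ?_⟩
          have hmem : x ∈ s n := by
            show |w' x| ≤ (n : ℝ) * h x
            rw [div_le_iff₀ (hhx_pos x)] at hN
            calc |w' x| ≤ (N : ℝ) * h x := hN
            _ ≤ (n : ℝ) * h x := by
                have : (N : ℝ) ≤ (n : ℝ) := by exact_mod_cast hn
                nlinarith [le_of_lt (hhx_pos x)]
          rw [hvdef]
          simp [Set.indicator_of_mem hmem]
        exact Tendsto.congr' (hev.mono fun n hn => hn.symm) tendsto_const_nhds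
    have hnorm : ∀ n, ‖uL n - u‖ = ∫ x, |v n x - w' x| ∂μ := by
      intro n
      rw [L1.norm_eq_integral_norm]
      refine integral_congr_ae ?_
      filter_upwards [Lp.coeFn_sub (uL n) u,
        (memLp_one_iff_integrable.mpr (hv_int n)).coeFn_toLp, hw'ae] with x hx1 hx2 hx3
      rw [hx1]
      show ‖(uL n : E → ℝ) x - (u : E → ℝ) x‖ = |v n x - w' x|
      rw [hx2, hx3, Real.norm_eq_abs]
    rw [tendsto_iff_norm_sub_tendsto_zero]
    refine squeeze_zero (g := fun n => C * ∫ x, |v n x - w' x| ∂μ)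
      (fun n => norm_nonneg _) (fun n => ?_) ?_
    · show ‖φ (uL n) - φ u‖ ≤ C * ∫ x, |v n x - w' x| ∂μ
      rw [← map_sub, ← hnorm n]
      exact φ.le_opNorm _
    · simpa using hdiff.const_mul C
  have hkey : ∫ x, G' x * w' x ∂μ = φ u :=
    tendsto_nhds_unique (hGv.congr star) hφv
  calc ∫ x, (hF₀mem.toLp G') x * u x ∂μ = ∫ x, G' x * w' x ∂μ := by
        refine integral_congr_ae ?_
        filter_upwards [hF₀mem.coeFn_toLp, hw'ae] with x h1 h2
        rw [h1, h2]
  _ = φ u := hkey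

end rep


set_option maxHeartbeats 1000000 in
set_option synthInstance.maxHeartbeats 400000 in
/-- For a Polish space `E` with a σ-finite Borel measure `μ`, the space
`L^∞(E,μ)` equipped with the topology `C(L^∞,L^1)` is complete: every filter on
`L^∞(E,μ)` which is Cauchy for the uniformity induced by the family of seminorms
`p_K(F) = sup_{g∈K} |∫ F g dμ|` (`K` ranging over norm-compact subsets of `L^1(E,μ)`)
converges in `L^∞(E,μ)` with respect to these seminorms. -/
theorem Linfty_complete_for_CLinftyL1
    {E : Type*} [TopologicalSpace E] [PolishSpace E] [MeasurableSpace E] [BorelSpace E]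
    (μ : Measure E) [SigmaFinite μ]
    (ℱ : Filter (Lp ℝ ⊤ μ)) [ℱ.NeBot]
    (hcauchy : ∀ K : Set (Lp ℝ 1 μ), IsCompact K → ∀ ε : ℝ, 0 < ε →
      ∃ A ∈ ℱ, ∀ F ∈ A, ∀ G ∈ A, pK μ K (F - G) < ε) :
    ∃ F₀ : Lp ℝ ⊤ μ, ∀ K : Set (Lp ℝ 1 μ), IsCompact K → ∀ ε : ℝ, 0 < ε →
      ∃ A ∈ ℱ, ∀ F ∈ A, pK μ K (F - F₀) < ε := by
  classical
  -- the integrals along the filter converge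
  have hlim : ∀ u : Lp ℝ 1 μ, ∃ l : ℝ,
      Tendsto (fun F : Lp ℝ ⊤ μ => ∫ x, F x * u x ∂μ) ℱ (𝓝 l) := by
    intro u
    have hc : Cauchy (map (fun F : Lp ℝ ⊤ μ => ∫ x, F x * u x ∂μ) ℱ) := by
      rw [Metric.cauchy_iff]
      refine ⟨map_neBot, fun ε hε => ?_⟩
      obtain ⟨A, hA, hAc⟩ := hcauchy {u} isCompact_singleton ε hε
      refine ⟨(fun F : Lp ℝ ⊤ μ => ∫ x, F x * u x ∂μ) '' A, image_mem_map hA, ?_⟩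
      rintro _ ⟨F, hF, rfl⟩ _ ⟨G, hG, rfl⟩
      have h2 : |∫ x, (F - G : Lp ℝ ⊤ μ) x * u x ∂μ| ≤ pK μ {u} (F - G) :=
        le_pK isCompact_singleton rfl _
      rw [integral_sub_mul] at h2
      rw [Real.dist_eq]
      exact lt_of_le_of_lt h2 (hAc F hF G hG)
    exact CompleteSpace.complete hc
  choose φ₀ hφ₀ using hlim
  -- key approximation estimate
  have key : ∀ (K : Set (Lp ℝ 1 μ)), IsCompact K → ∀ δ : ℝ,
      ∀ A ∈ ℱ, (∀ F ∈ A, ∀ G ∈ A, pK μ K (F - G) < δ) →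
      ∀ F ∈ A, ∀ u ∈ K, |(∫ x, F x * u x ∂μ) - φ₀ u| ≤ δ := by
    intro K hK δ A hA hAc F hF u hu
    have h1 : Tendsto (fun G : Lp ℝ ⊤ μ =>
        |(∫ x, F x * u x ∂μ) - ∫ x, G x * u x ∂μ|) ℱ
        (𝓝 |(∫ x, F x * u x ∂μ) - φ₀ u|) := (tendsto_const_nhds.sub (hφ₀ u)).abs
    refine le_of_tendsto h1 ?_
    filter_upwards [hA] with G hG
    have h2 : |∫ x, (F - G : Lp ℝ ⊤ μ) x * u x ∂μ| ≤ pK μ K (F - G) := le_pK hK hu _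
    rw [integral_sub_mul] at h2
    exact h2.trans (hAc F hF G hG).le
  -- linearity of the limit functional
  have hadd : ∀ u v, φ₀ (u + v) = φ₀ u + φ₀ v := by
    intro u v
    refine tendsto_nhds_unique (hφ₀ (u + v)) ?_
    exact ((hφ₀ u).add (hφ₀ v)).congr fun F => (integral_mul_add F u v).symm
  have hsmul : ∀ (a : ℝ) u, φ₀ (a • u) = a * φ₀ u := by
    intro a u
    refine tendsto_nhds_unique (hφ₀ (a • u)) ?_
    exact ((hφ₀ u).const_mul a).congr fun F => (integral_mul_smul F a u).symm
  set L : Lp ℝ 1 μ →ₗ[ℝ] ℝ :=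
    { toFun := φ₀
      map_add' := hadd
      map_smul' := by intro a u; simpa using hsmul a u } with hL
  -- continuity of the limit functional
  have hLcont : Continuous L := by
    rw [continuous_iff_seqContinuous]
    intro sq u hsq
    rw [Metric.tendsto_atTop]
    intro ε hε
    have hKc : IsCompact (insert u (Set.range sq)) := hsq.isCompact_insert_range
    obtain ⟨A, hA, hAc⟩ := hcauchy _ hKc (ε/4) (by linarith)
    obtain ⟨F, hF⟩ := Filter.nonempty_of_mem hA
    have h1 := key _ hKc (ε/4) A hA hAc F hF
    obtain ⟨N, hN⟩ := Metric.tendsto_atTop.mp hsq (ε/(4*(‖F‖+1))) (by positivity)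
    refine ⟨N, fun n hn => ?_⟩
    have h2 := h1 u (Set.mem_insert _ _)
    have h3 := h1 (sq n) (Set.mem_insert_of_mem _ ⟨n, rfl⟩)
    have h4 : |(∫ x, F x * (sq n) x ∂μ) - ∫ x, F x * u x ∂μ| ≤ ‖F‖ * ‖sq n - u‖ := by
      rw [← integral_mul_sub]
      exact abs_integral_le F (sq n - u)
    have h5 : ‖sq n - u‖ < ε/(4*(‖F‖+1)) := by
      rw [← dist_eq_norm]
      exact hN n hn
    have h6 : ‖F‖ * ‖sq n - u‖ ≤ ε/4 := by
      calc ‖F‖ * ‖sq n - u‖ ≤ (‖F‖+1) * (ε/(4*(‖F‖+1))) :=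
            mul_le_mul (by linarith) h5.le (norm_nonneg _) (by positivity)
      _ = ε/4 := by
          field_simp
    show dist ((⇑L ∘ sq) n) (L u) < ε
    rw [Real.dist_eq]
    show |φ₀ (sq n) - φ₀ u| < ε
    have h7 : |φ₀ (sq n) - φ₀ u| ≤
        |φ₀ (sq n) - ∫ x, F x * (sq n) x ∂μ| + |(∫ x, F x * (sq n) x ∂μ) - ∫ x, F x * u x ∂μ|
          + |(∫ x, F x * u x ∂μ) - φ₀ u| := by
      calc |φ₀ (sq n) - φ₀ u| ≤ |φ₀ (sq n) - ∫ x, F x * u x ∂μ|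
            + |(∫ x, F x * u x ∂μ) - φ₀ u| := abs_sub_le _ _ _
      _ ≤ (|φ₀ (sq n) - ∫ x, F x * (sq n) x ∂μ|
            + |(∫ x, F x * (sq n) x ∂μ) - ∫ x, F x * u x ∂μ|)
            + |(∫ x, F x * u x ∂μ) - φ₀ u| := by
          gcongr
          exact abs_sub_le _ _ _
    have h3' : |φ₀ (sq n) - ∫ x, F x * (sq n) x ∂μ| ≤ ε/4 := by
      rw [abs_sub_comm]
      exact h3
    linarith
  set φC : Lp ℝ 1 μ →L[ℝ] ℝ := { toLinearMap := L, cont := hLcont } with hφC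
  obtain ⟨F₀, hF₀⟩ := L1_dual_rep μ φC
  refine ⟨F₀, ?_⟩
  intro K hK ε hε
  obtain ⟨A, hA, hAc⟩ := hcauchy K hK (ε/2) (by linarith)
  refine ⟨A, hA, fun F hF => ?_⟩
  have hle : ∀ u ∈ K, |∫ x, (F - F₀ : Lp ℝ ⊤ μ) x * u x ∂μ| ≤ ε/2 := by
    intro u hu
    rw [integral_sub_mul, hF₀ u]
    show |(∫ x, F x * u x ∂μ) - φ₀ u| ≤ ε/2
    exact key K hK (ε/2) A hA hAc F hF u hu
  exact lt_of_le_of_lt (pK_le (by linarith) hle) (by linarith)
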